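/- For all positive integers s, p, and all integers n with 1 ≤ n ≤ s·p + 1, the number of multisets F contained in the multiset {1 repeated s times, …, n−1 repeated s times, n} such that n ∈ F and min F ≥ p·|F| equals the sum over k from 1 to ⌊(s·n+1)/(s·p+1)⌋ of the binomial coefficient C(n − p·k + k − 2, k − 1). -/

import Mathlib

/-- The collection of sub-multisets `F` of the multiset consisting of `s` copies of each of
`1, …, n-1` together with one copy of `n`, such that `n ∈ F` and `min F ≥ p * |F|`. -/
def SchreierMultisets (s p n : ℕ) : Finset (Multiset ℕ) :=
  (((Finset.Ico 1 n).val.bind fun k => Multiset.replicate s k) + {n}).powerset.toFinset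
    |>.filter fun F => n ∈ F ∧ ∀ x ∈ F, p * Multiset.card F ≤ x

/-- The ground multiset. -/
def sGround (s n : ℕ) : Multiset ℕ :=
  ((Finset.Ico 1 n).val.bind fun k => Multiset.replicate s k) + {n}

lemma count_sGround (s n x : ℕ) :
    Multiset.count x (sGround s n) =
      (if 1 ≤ x ∧ x < n then s else 0) + (if x = n then 1 else 0) := by
  unfold sGround
  rw [Multiset.count_add, Multiset.count_bind, Multiset.count_singleton]
  congr 1
  have : ((Finset.Ico 1 n).val.map fun b => Multiset.count x (Multiset.replicate s b)).sum
      = ∑ b ∈ Finset.Ico 1 n, if b = x then s else 0 := by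
    apply congrArg
    apply Multiset.map_congr rfl
    intro b _
    exact Multiset.count_replicate x b s
  rw [this, Finset.sum_ite_eq' (Finset.Ico 1 n) x (fun _ => s)]
  simp [Finset.mem_Ico]

lemma mem_schreier {s p n : ℕ} {F : Multiset ℕ} :
    F ∈ SchreierMultisets s p n ↔
      F ≤ sGround s n ∧ n ∈ F ∧ ∀ x ∈ F, p * Multiset.card F ≤ x := by
  simp [SchreierMultisets, sGround, Multiset.mem_powerset, and_assoc]

lemma card_finset_sym (t : Finset ℕ) (j : ℕ) :
    (t.sym j).card = (t.card + j - 1).choose j := by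
  classical
  have him : t.sym j = Finset.image (Sym.map (Subtype.val : ↥t → ℕ)) Finset.univ := by
    ext m
    simp only [Finset.mem_sym_iff, Finset.mem_image, Finset.mem_univ, true_and]
    constructor
    · intro h
      refine ⟨m.attach.map (fun x => (⟨x.1, h x.1 x.2⟩ : ↥t)), ?_⟩
      apply Sym.coe_injective
      simp only [Sym.coe_map, Sym.coe_attach, Multiset.map_map, Function.comp]
      exact (Multiset.map_map _ _ _).trans (Multiset.attach_map_val _)
    · rintro ⟨G, rfl⟩ a ha
      obtain ⟨b, _, rfl⟩ := Sym.mem_map.mp ha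
      exact b.2
  rw [him, Finset.card_image_of_injective _ (Sym.map_injective Subtype.val_injective j),
    Finset.card_univ, Sym.card_sym_eq_choose, Fintype.card_coe]

theorem card_schreierMultisets_initial (s p n : ℕ) (hs : 1 ≤ s) (hp : 1 ≤ p)
    (hn1 : 1 ≤ n) (hn2 : n ≤ s * p + 1) :
    (SchreierMultisets s p n).card =
      ∑ k ∈ Finset.Icc 1 ((s * n + 1) / (s * p + 1)), (n - p * k + k - 2).choose (k - 1) := by
  classical
  have hspos : 0 < s * p + 1 := Nat.succ_pos _
  rw [Finset.card_eq_sum_card_fiberwise (f := fun F => Multiset.card F)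
      (t := Finset.Icc 1 ((s * n + 1) / (s * p + 1)))
      (fun F hF => by
        rw [Finset.mem_coe, mem_schreier] at hF
        obtain ⟨hle, hnF, hmin⟩ := hF
        have hk1 : 1 ≤ Multiset.card F := Multiset.card_pos_iff_exists_mem.mpr ⟨n, hnF⟩
        set k := Multiset.card F with hk
        have hpk : p * k ≤ n := hmin n hnF
        have hcn : Multiset.count n F ≤ 1 := by
          have := Multiset.count_le_of_le n hle
          rw [count_sGround] at this
          simpa using this
        have hub : k * (s * p + 1) ≤ s * n + 1 := by
          by_cases hlt : p * k < n
          · have h1 : p * k ≤ s * p := by omega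
            have hks : k ≤ s := Nat.le_of_mul_le_mul_left (by rwa [mul_comm s p] at h1) hp
            nlinarith [Nat.mul_le_mul_left s (show p * k + 1 ≤ n by omega), hks]
          · -- p * k = n, all elements equal n, so k = 1
            have hpkn : p * k = n := le_antisymm hpk (le_of_not_gt hlt)
            have hall : ∀ x ∈ F, x = n := by
              intro x hx
              have h1 : n ≤ x := hpkn ▸ hmin x hx
              have h2 : x ≤ n := by
                have hxg : x ∈ sGround s n := Multiset.mem_of_le hle hx
                have := Multiset.count_pos.mpr hxg
                rw [count_sGround] at this
                split_ifs at this <;> omega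
              omega
            have : F = Multiset.replicate k n := Multiset.eq_replicate.mpr ⟨hk.symm, hall⟩
            have hcnt : Multiset.count n F = k := by
              rw [this, Multiset.count_replicate_self]
            have hk1' : k = 1 := by omega
            have hpn : p ≤ n := by
              have h2 := hpkn
              rw [hk1', mul_one] at h2
              omega
            calc k * (s * p + 1) = s * p + 1 := by rw [hk1', one_mul]
              _ ≤ s * n + 1 := by have := Nat.mul_le_mul_left s hpn; omega
        exact Finset.mem_coe.mpr (Finset.mem_Icc.mpr ⟨hk1, (Nat.le_div_iff_mul_le hspos).mpr hub⟩))]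
  apply Finset.sum_congr rfl
  intro k hk
  obtain ⟨hk1, hkM⟩ := Finset.mem_Icc.mp hk
  have hkmul : k * (s * p + 1) ≤ s * n + 1 := (Nat.le_div_iff_mul_le hspos).mp hkM
  have hpk : p * k ≤ n := by nlinarith
  have hks : k ≤ s := by nlinarith
  have himg : Finset.filter (fun F => Multiset.card F = k) (SchreierMultisets s p n) =
      Finset.image (fun G : Sym ℕ (k - 1) => n ::ₘ (G : Multiset ℕ))
        ((Finset.Ico (p * k) n).sym (k - 1)) := by
    ext F
    rw [Finset.mem_filter, Finset.mem_image, mem_schreier]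
    constructor
    · rintro ⟨⟨hle, hnF, hmin⟩, hcard⟩
      have hce : Multiset.card (F.erase n) = k - 1 := by
        rw [Multiset.card_erase_of_mem hnF, hcard]
        rfl
      have hcn : Multiset.count n F ≤ 1 := by
        have := Multiset.count_le_of_le n hle
        rw [count_sGround] at this
        simpa using this
      refine ⟨Sym.mk (F.erase n) hce, ?_, ?_⟩
      · rw [Finset.mem_sym_iff]
        intro a ha
        rw [Sym.mem_mk] at ha
        have haF : a ∈ F := Multiset.mem_of_mem_erase ha
        have h1 : p * k ≤ a := hcard ▸ hmin a haF
        have h2 : a < n := by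
          rcases lt_or_ge a n with h | h
          · exact h
          · exfalso
            have han : a = n := by
              have hxg : a ∈ sGround s n := Multiset.mem_of_le hle haF
              have := Multiset.count_pos.mpr hxg
              rw [count_sGround] at this
              split_ifs at this <;> omega
            subst han
            have := Multiset.count_pos.mpr ha
            rw [Multiset.count_erase_self] at this
            omega
        exact Finset.mem_Ico.mpr ⟨h1, h2⟩
      · exact Multiset.cons_erase hnF
    · rintro ⟨G, hG, rfl⟩
      have hGcard : Multiset.card (G : Multiset ℕ) = k - 1 := G.2
      have hGel : ∀ a ∈ (G : Multiset ℕ), p * k ≤ a ∧ a < n := by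
        intro a ha
        exact Finset.mem_Ico.mp (Finset.mem_sym_iff.mp hG a ha)
      have hcard : Multiset.card (n ::ₘ (G : Multiset ℕ)) = k := by
        rw [Multiset.card_cons, hGcard]; omega
      refine ⟨⟨?_, Multiset.mem_cons_self n _, ?_⟩, hcard⟩
      · rw [Multiset.le_iff_count]
        intro x
        rw [count_sGround, Multiset.count_cons]
        have hcnt : Multiset.count x (G : Multiset ℕ) ≤ k - 1 := by
          have h := Multiset.count_le_card x (G : Multiset ℕ)
          rw [hGcard] at h
          exact h
        by_cases hx : x ∈ (G : Multiset ℕ)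
        · obtain ⟨h1, h2⟩ := hGel x hx
          have hx1 : 1 ≤ x := le_trans (by nlinarith) h1
          split_ifs <;> omega
        · have : Multiset.count x (G : Multiset ℕ) = 0 := Multiset.count_eq_zero.mpr hx
          split_ifs <;> omega
      · intro x hx
        rw [hcard]
        rcases Multiset.mem_cons.mp hx with rfl | hxG
        · exact hpk
        · exact (hGel x hxG).1
  rw [himg, Finset.card_image_of_injective _ (fun a b hab => Sym.coe_injective
      ((Multiset.cons_inj_right n).mp hab)), card_finset_sym, Nat.card_Ico]
  congr 1
  omega
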